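/- Let q, p ∈ ℝ³ be linearly independent. Then for q', p' ∈ ℝ³ one has q' × p' = q × p if and only if there exist a, b, c, d ∈ ℝ with a d − b c = 1 such that q' = a q + b p and p' = c q + d p. That is, the fibre of the momentum map J(q, p) = q × p through a point (q, p) with q × p ≠ 0 equals {(a q + b p, c q + d p) : a d − b c = 1}. -/

import Mathlib

open Matrix

lemma cross_expand (q p : Fin 3 → ℝ) (a b c d : ℝ) :
    (a • q + b • p) ⨯₃ (c • q + d • p) = (a * d - b * c) • (q ⨯₃ p) := by
  have h1 : (a • q + b • p) ⨯₃ (c • q + d • p)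
      = (a*c) • (q ⨯₃ q) + (a*d) • (q ⨯₃ p) + (b*c) • (p ⨯₃ q) + (b*d) • (p ⨯₃ p) := by
    rw [LinearMap.map_add, LinearMap.map_smul, LinearMap.map_smul]
    simp only [LinearMap.add_apply, LinearMap.smul_apply, LinearMap.map_add,
      LinearMap.map_smul, smul_smul, smul_add]
    module
  rw [h1, cross_self, cross_self, ← cross_anticomm]
  match_scalars; ring

/-- For linearly independent `q, p ∈ ℝ³`, the fibre of the momentum map
`J(q, p) = q × p` through `(q, p)` is `{(a q + b p, c q + d p) : a d − b c = 1}`. -/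
theorem cross_eq_iff_sl2_orbit
    (q p : Fin 3 → ℝ) (h : LinearIndependent ℝ ![q, p]) (q' p' : Fin 3 → ℝ) :
    q' ⨯₃ p' = q ⨯₃ p ↔
      ∃ a b c d : ℝ, a * d - b * c = 1 ∧ q' = a • q + b • p ∧ p' = c • q + d • p := by
  have hn : q ⨯₃ p ≠ 0 := crossProduct_ne_zero_iff_linearIndependent.mpr h
  set n := q ⨯₃ p with hn_def
  have hnn : n ⬝ᵥ n ≠ 0 := fun hc => hn (by rwa [dotProduct_self_eq_zero] at hc)
  constructor
  · intro heq
    -- ![q, p, n] is linearly independent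
    have hdet : Matrix.det ![q, p, n] = n ⬝ᵥ n := by
      rw [← triple_product_eq_det, triple_product_permutation, triple_product_permutation]
    have hli : LinearIndependent ℝ ![q, p, n] := by
      have hu : IsUnit (Matrix.of ![q, p, n]) := by
        rw [Matrix.isUnit_iff_isUnit_det, isUnit_iff_ne_zero]
        show Matrix.det ![q, p, n] ≠ 0
        rw [hdet]; exact hnn
      have := Matrix.linearIndependent_rows_iff_isUnit.mpr hu
      exact this
    have hspan : Submodule.span ℝ (Set.range ![q, p, n]) = ⊤ :=
      hli.span_eq_top_of_card_eq_finrank (by simp)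
    -- decompose q' and p'
    have hq'mem : q' ∈ Submodule.span ℝ (Set.range ![q, p, n]) := by rw [hspan]; trivial
    have hp'mem : p' ∈ Submodule.span ℝ (Set.range ![q, p, n]) := by rw [hspan]; trivial
    rw [Finsupp.mem_span_range_iff_exists_finsupp] at hq'mem hp'mem
    obtain ⟨cq, hcq⟩ := hq'mem
    obtain ⟨cp, hcp⟩ := hp'mem
    have hcq' : q' = cq 0 • q + cq 1 • p + cq 2 • n := by
      rw [← hcq, Finsupp.sum_fintype _ _ (by simp), Fin.sum_univ_three]
      simp [Matrix.cons_val_zero, Matrix.cons_val_one]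
    have hcp' : p' = cp 0 • q + cp 1 • p + cp 2 • n := by
      rw [← hcp, Finsupp.sum_fintype _ _ (by simp), Fin.sum_univ_three]
      simp [Matrix.cons_val_zero, Matrix.cons_val_one]
    -- dot products with n vanish
    have hqn : q ⬝ᵥ n = 0 := dot_self_cross q p
    have hpn : p ⬝ᵥ n = 0 := dot_cross_self q p
    have hq'n : q' ⬝ᵥ n = 0 := by rw [← heq]; exact dot_self_cross q' p'
    have hp'n : p' ⬝ᵥ n = 0 := by rw [← heq]; exact dot_cross_self q' p'
    have hcq2 : cq 2 = 0 := by
      have := hq'n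
      rw [hcq'] at this
      simp only [add_dotProduct, smul_dotProduct, hqn, hpn, smul_eq_mul,
        mul_zero, zero_add, add_zero] at this
      exact (mul_eq_zero.mp this).resolve_right hnn
    have hcp2 : cp 2 = 0 := by
      have := hp'n
      rw [hcp'] at this
      simp only [add_dotProduct, smul_dotProduct, hqn, hpn, smul_eq_mul,
        mul_zero, zero_add, add_zero] at this
      exact (mul_eq_zero.mp this).resolve_right hnn
    rw [hcq2, zero_smul, add_zero] at hcq'
    rw [hcp2, zero_smul, add_zero] at hcp'
    refine ⟨cq 0, cq 1, cp 0, cp 1, ?_, hcq', hcp'⟩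
    have : (cq 0 * cp 1 - cq 1 * cp 0) • n = n := by
      rw [← cross_expand q p, ← hcq', ← hcp', heq]
    have h1 : ((cq 0 * cp 1 - cq 1 * cp 0) - 1) • n = 0 := by
      rw [sub_smul, one_smul, this, sub_self]
    rcases smul_eq_zero.mp h1 with h2 | h2
    · linarith [sub_eq_zero.mp h2]
    · exact absurd h2 hn
  · rintro ⟨a, b, c, d, habcd, rfl, rfl⟩
    rw [cross_expand, habcd, one_smul]
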